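/- arXiv:1005.0016 — 2 statements merged into one kernel-verified Lean document; each statement's English description precedes it below -/
import Mathlib

section
/- In any orthomodular lattice, the 3OA law (a₁ → a₃) ∩ (a₁ ≡₃ a₂) ≤ a₂ → a₃, where a₁ ≡₃ a₂ := ((a₁→a₃) ∩ (a₂→a₃)) ∪ ((a₁'→a₃) ∩ (a₂'→a₃)), holds if and only if the equation a ∩ ((a ∩ b) ∪ ((a→c) ∩ (b→c))) ≤ b' → c holds. -/
/-- An orthomodular lattice. -/
class OrthomodularLattice (α : Type*) extends Lattice α, BoundedOrder α, Compl α where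
  sup_compl : ∀ a : α, a ⊔ aᶜ = ⊤
  inf_compl : ∀ a : α, a ⊓ aᶜ = ⊥
  compl_antitone : ∀ a b : α, a ≤ b → bᶜ ≤ aᶜ
  compl_compl : ∀ a : α, aᶜᶜ = a
  orthomodular : ∀ a b : α, a ≤ b → b = a ⊔ (aᶜ ⊓ b)

/-- The Sasaki hook `a → b := a' ∪ (a ∩ b)`. -/
def shook {α : Type*} [OrthomodularLattice α] (a b : α) : α := aᶜ ⊔ (a ⊓ b)

section OMLaux

variable {α : Type*} [OrthomodularLattice α]

private lemma oml_cc (a : α) : aᶜᶜ = a := OrthomodularLattice.compl_compl a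

private lemma oml_anti {a b : α} (h : a ≤ b) : bᶜ ≤ aᶜ :=
  OrthomodularLattice.compl_antitone a b h

private lemma oml_le_compl_of {a b : α} (h : a ≤ bᶜ) : b ≤ aᶜ := by
  have := oml_anti h; rwa [oml_cc] at this

private lemma oml_eq_bot {x y : α} (h1 : x ≤ y) (h2 : x ≤ yᶜ) : x = ⊥ :=
  le_antisymm (by
    have : x ≤ y ⊓ yᶜ := le_inf h1 h2
    rwa [OrthomodularLattice.inf_compl] at this) bot_le

private lemma oml_dm_sup (a b : α) : (a ⊔ b)ᶜ = aᶜ ⊓ bᶜ := by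
  apply le_antisymm
  · exact le_inf (oml_anti le_sup_left) (oml_anti le_sup_right)
  · exact oml_le_compl_of (sup_le (oml_le_compl_of inf_le_left) (oml_le_compl_of inf_le_right))

/-- For `t ≤ c`, `(cᶜ ⊔ t) ⊓ c = t`. -/
private lemma oml_L1 {t c : α} (ht : t ≤ c) : (cᶜ ⊔ t) ⊓ c = t := by
  have h2 : t ≤ (cᶜ ⊔ t) ⊓ c := le_inf le_sup_right ht
  have hom := OrthomodularLattice.orthomodular _ _ h2
  have hbot : tᶜ ⊓ ((cᶜ ⊔ t) ⊓ c) = ⊥ := by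
    apply oml_eq_bot (x := tᶜ ⊓ ((cᶜ ⊔ t) ⊓ c)) (y := cᶜ ⊔ t)
    · exact le_trans inf_le_right inf_le_left
    · rw [oml_dm_sup, oml_cc]
      exact le_inf (le_trans inf_le_right inf_le_right) inf_le_left
  rw [hbot, sup_bot_eq] at hom
  exact hom

/-- The key identity `(a→c)→c = aᶜ→c`. -/
private lemma oml_key (a c : α) : shook (shook a c) c = shook aᶜ c := by
  set m := a ⊓ c with hm
  have hpc : (shook a c)ᶜ = a ⊓ mᶜ := by
    rw [shook, oml_dm_sup, oml_cc]
  have hma : m ≤ a := inf_le_left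
  have hstep1 : (aᶜ ⊔ m) ⊓ mᶜ = aᶜ := by
    have := oml_L1 (t := aᶜ) (c := mᶜ) (oml_anti hma)
    rwa [oml_cc, sup_comm] at this
  -- u ≤ m ⊔ (aᶜ ⊓ c)
  have hmu : m ≤ (shook a c) ⊓ c := le_inf le_sup_right inf_le_right
  have hu : (shook a c) ⊓ c ≤ m ⊔ (aᶜ ⊓ c) := by
    have hom := OrthomodularLattice.orthomodular _ _ hmu
    have h4 : mᶜ ⊓ (shook a c ⊓ c) ≤ aᶜ ⊓ c := by
      refine le_inf ?_ (le_trans inf_le_right inf_le_right)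
      calc mᶜ ⊓ (shook a c ⊓ c) ≤ (aᶜ ⊔ m) ⊓ mᶜ :=
            le_inf (le_trans inf_le_right inf_le_left) inf_le_left
        _ = aᶜ := hstep1
    calc shook a c ⊓ c = m ⊔ (mᶜ ⊓ (shook a c ⊓ c)) := hom
      _ ≤ m ⊔ (aᶜ ⊓ c) := sup_le_sup_left h4 m
  show (shook a c)ᶜ ⊔ (shook a c ⊓ c) = aᶜᶜ ⊔ (aᶜ ⊓ c)
  rw [hpc, oml_cc]
  apply le_antisymm
  · exact sup_le (le_sup_of_le_left inf_le_left) (hu.trans (sup_le_sup_right hma _))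
  · refine sup_le ?_ (le_sup_of_le_right (inf_le_inf_right c le_sup_left))
    have hom := OrthomodularLattice.orthomodular _ _ hma
    calc a = m ⊔ (mᶜ ⊓ a) := hom
      _ ≤ (a ⊓ mᶜ) ⊔ (shook a c ⊓ c) :=
          sup_le (le_sup_of_le_right hmu)
            (le_sup_of_le_left (le_inf inf_le_right inf_le_left))

/-- `(a→c)ᶜ→c = a→c`. -/
private lemma oml_qbot (a c : α) : shook (shook a c)ᶜ c = shook a c := by
  have hpc : (shook a c)ᶜ = a ⊓ (a ⊓ c)ᶜ := by rw [shook, oml_dm_sup, oml_cc]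
  have hb : (shook a c)ᶜ ⊓ c = ⊥ := by
    rw [hpc]
    apply oml_eq_bot (y := a ⊓ c)
    · exact le_inf (le_trans inf_le_left inf_le_left) inf_le_right
    · exact le_trans inf_le_left inf_le_right
  rw [shook, oml_cc, hb, sup_bot_eq]

private lemma oml_a_le (a c : α) : a ≤ shook aᶜ c := by
  rw [shook, oml_cc]; exact le_sup_left

end OMLaux

/-- In any orthomodular lattice, the 3OA law
`(a₁→a₃) ∩ (a₁ ≡₃ a₂) ≤ a₂→a₃` holds iff the equation
`a ∩ ((a ∩ b) ∪ ((a→c) ∩ (b→c))) ≤ b' → c` holds. -/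
theorem stmt_8 {α : Type*} [OrthomodularLattice α] :
    (∀ a₁ a₂ a₃ : α,
      shook a₁ a₃ ⊓ ((shook a₁ a₃ ⊓ shook a₂ a₃) ⊔ (shook a₁ᶜ a₃ ⊓ shook a₂ᶜ a₃)) ≤
        shook a₂ a₃) ↔
    (∀ a b c : α, a ⊓ ((a ⊓ b) ⊔ (shook a c ⊓ shook b c)) ≤ shook bᶜ c) := by
  constructor
  · intro h3 a b c
    have H := h3 aᶜ bᶜ c
    rw [oml_cc, oml_cc] at H
    refine le_trans ?_ H
    exact inf_le_inf (oml_a_le a c)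
      (sup_le_sup (inf_le_inf (oml_a_le a c) (oml_a_le b c)) le_rfl)
  · intro hE a₁ a₂ a₃
    have H := hE (shook a₁ a₃) (shook a₂ a₃) a₃
    rw [oml_key, oml_key, oml_qbot] at H
    exact H
end

section
/- In any orthomodular lattice satisfying the 3OA law, the inequality a ∩ ((a ∩ b) ∪ ((a→c) ∩ (b→c))) ≤ b' → c holds. -/
lemma le_shook_compl {α : Type*} [OrthomodularLattice α] (x y : α) : x ≤ shook xᶜ y := by
  unfold shook
  rw [OrthomodularLattice.compl_compl]
  exact le_sup_left

/-- In any orthomodular lattice satisfying the 3OA law,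
`a ∩ ((a ∩ b) ∪ ((a→c) ∩ (b→c))) ≤ b' → c`. -/
theorem stmt_9 {α : Type*} [OrthomodularLattice α]
    (h3OA : ∀ a b c : α,
      shook a c ⊓ ((shook a c ⊓ shook b c) ⊔ (shook aᶜ c ⊓ shook bᶜ c)) ≤ shook b c) :
    ∀ a b c : α, a ⊓ ((a ⊓ b) ⊔ (shook a c ⊓ shook b c)) ≤ shook bᶜ c := by
  intro a b c
  have key := h3OA aᶜ bᶜ c
  rw [OrthomodularLattice.compl_compl a, OrthomodularLattice.compl_compl b] at key
  refine le_trans (inf_le_inf (le_shook_compl a c) (sup_le_sup ?_ le_rfl)) key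
  exact inf_le_inf (le_shook_compl a c) (le_shook_compl b c)
end
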